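/- Let r_i=2^{-2^i} and a_i=2^{2^{i+1}}/(i(i+1)), and let f be the Kneser function of order 2 with f'(x)=2a_i x on (r_{i+1},r_i). Then with h(r)=log 2/ log|log r|, one has lim_{r→0} f(r)/h(r)=1, while liminf_{r→0} f'(r)/h'(r) = 0 and limsup_{r→0} f'(r)/h'(r) = ∞. -/

import Mathlib

open Filter Set Topology

/-- `r_i = 2^{-2^i}`. -/
noncomputable def rseq (i : ℕ) : ℝ := ((2 : ℝ) ^ (2 ^ i : ℕ))⁻¹

/-- `a_i = 2^{2^{i+1}} / (i(i+1))`. -/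
noncomputable def aseq (i : ℕ) : ℝ := (2 : ℝ) ^ (2 ^ (i + 1) : ℕ) / ((i : ℝ) * ((i : ℝ) + 1))

/-- The gauge function `h(r) = log 2 / log |log r|`. -/
noncomputable def gaugeH (r : ℝ) : ℝ := Real.log 2 / Real.log |Real.log r|

/-- term of the series -/
noncomputable def bseq (j : ℕ) : ℝ := aseq j * ((rseq j) ^ 2 - (rseq (j + 1)) ^ 2)

/-- tail sums -/
noncomputable def Tseq (i : ℕ) : ℝ := ∑' j : ℕ, if i ≤ j then bseq j else 0

lemma rseq_pos (i : ℕ) : 0 < rseq i := by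
  unfold rseq; positivity

lemma pow_pow_succ (i : ℕ) : (((2 : ℝ) ^ (2 ^ i : ℕ))⁻¹) ^ 2 = ((2 : ℝ) ^ (2 ^ (i+1) : ℕ))⁻¹ := by
  rw [inv_pow, ← pow_mul, ← pow_succ]

lemma rseq_succ (i : ℕ) : rseq (i + 1) = rseq i ^ 2 := by
  unfold rseq
  rw [pow_pow_succ]

lemma rseq_lt_one (i : ℕ) : rseq i < 1 := by
  unfold rseq
  rw [inv_lt_one_iff₀]
  right
  exact one_lt_pow₀ (by norm_num) (by positivity)

lemma rseq_le_half (i : ℕ) : rseq i ≤ 1 / 2 := by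
  unfold rseq
  rw [div_eq_inv_mul, mul_one, inv_le_inv₀ (by positivity) (by norm_num)]
  calc (2:ℝ) = 2 ^ 1 := (pow_one 2).symm
  _ ≤ 2 ^ (2 ^ i : ℕ) := by
      apply pow_le_pow_right₀ one_le_two
      exact Nat.one_le_two_pow

lemma rseq_strictAnti : StrictAnti rseq := by
  apply strictAnti_nat_of_succ_lt
  intro n
  rw [rseq_succ, sq]
  calc rseq n * rseq n < 1 * rseq n := by
        apply mul_lt_mul_of_pos_right (rseq_lt_one n) (rseq_pos n)
  _ = rseq n := one_mul _

lemma rseq_le_pow (i : ℕ) : rseq i ≤ (2 : ℝ)⁻¹ ^ i := by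
  unfold rseq
  rw [inv_pow, inv_le_inv₀ (by positivity) (by positivity)]
  exact pow_le_pow_right₀ one_le_two (Nat.le_of_lt (Nat.lt_two_pow_self))

lemma log_rseq (i : ℕ) : Real.log (rseq i) = -((2:ℝ) ^ i * Real.log 2) := by
  unfold rseq
  rw [Real.log_inv, Real.log_pow]
  push_cast
  ring

lemma rseq_tendsto : Filter.Tendsto rseq atTop (𝓝 0) := by
  apply squeeze_zero (fun i => (rseq_pos i).le) rseq_le_pow
  exact tendsto_pow_atTop_nhds_zero_of_lt_one (by norm_num) (by norm_num)

/-- existence of the interval containing x -/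
lemma exists_interval {x : ℝ} (k : ℕ) (hx : 0 < x) (hxk : x ≤ rseq k) :
    ∃ i : ℕ, k ≤ i ∧ rseq (i + 1) < x ∧ x ≤ rseq i := by
  have hex : ∃ n, rseq n < x := by
    obtain ⟨n, hn⟩ := ((tendsto_order.1 rseq_tendsto).2 x hx).exists
    exact ⟨n, hn⟩
  classical
  obtain ⟨n₀, hn₀, hmin⟩ : ∃ n, rseq n < x ∧ ∀ m, m < n → ¬ rseq m < x :=
    ⟨Nat.find hex, Nat.find_spec hex, fun m hm => Nat.find_min hex hm⟩
  match n₀, hn₀, hmin with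
  | 0, hn₀, hmin =>
    exfalso
    have : rseq k ≤ rseq 0 := rseq_strictAnti.antitone (Nat.zero_le k)
    linarith [hxk]
  | (i+1), hn₀, hmin =>
    refine ⟨i, ?_, hn₀, ?_⟩
    · by_contra h
      push_neg at h
      have h2 : rseq k ≤ rseq (i+1) := rseq_strictAnti.antitone (Nat.succ_le_of_lt h)
      exact absurd (hxk.trans h2) (not_le.2 hn₀)
    · exact not_lt.1 (hmin i (Nat.lt_succ_self i))

lemma aseq_rseq_sq {i : ℕ} (hi : 1 ≤ i) :
    aseq i * rseq i ^ 2 = 1 / ((i : ℝ) * ((i : ℝ) + 1)) := by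
  have h1 : (0:ℝ) < (i:ℝ) := by exact_mod_cast hi
  unfold aseq rseq
  rw [pow_pow_succ, div_mul_eq_mul_div, mul_inv_cancel₀ (by positivity)]

lemma bseq_eq {i : ℕ} (hi : 1 ≤ i) :
    bseq i = (1 - rseq i ^ 2) / ((i : ℝ) * ((i : ℝ) + 1)) := by
  have h := aseq_rseq_sq hi
  unfold bseq
  rw [rseq_succ]
  have h2 : aseq i * (rseq i ^ 2 - (rseq i ^ 2) ^ 2)
      = aseq i * rseq i ^ 2 * (1 - rseq i ^ 2) := by ring
  rw [h2, h]
  ring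

lemma bseq_nonneg (i : ℕ) : 0 ≤ bseq i := by
  rcases Nat.eq_zero_or_pos i with h | h
  · subst h
    unfold bseq aseq
    norm_num
  · rw [bseq_eq h]
    have h1 : (0:ℝ) < (i:ℝ) := by exact_mod_cast h
    have h2 : rseq i ^ 2 ≤ 1 := by
      have := (rseq_lt_one i).le
      have := (rseq_pos i).le
      nlinarith
    apply div_nonneg (by linarith) (by positivity)

lemma bseq_le {i : ℕ} (hi : 1 ≤ i) : bseq i ≤ 1/(i:ℝ) - 1/((i:ℝ)+1) := by
  have h1 : (0:ℝ) < (i:ℝ) := by exact_mod_cast hi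
  rw [bseq_eq hi]
  have h2 : (0:ℝ) < rseq i ^ 2 := pow_pos (rseq_pos i) 2
  have key : 1/(i:ℝ) - 1/((i:ℝ)+1) = 1 / ((i : ℝ) * ((i : ℝ) + 1)) := by
    field_simp; ring
  rw [key]
  have hd : (0:ℝ) < (i:ℝ) * ((i:ℝ)+1) := mul_pos h1 (by linarith)
  rw [div_le_div_iff₀ hd hd]
  nlinarith

lemma bseq_ge {i j : ℕ} (hi : 1 ≤ i) (hij : i ≤ j) :
    (1 - rseq i ^ 2) * (1/(j:ℝ) - 1/((j:ℝ)+1)) ≤ bseq j := by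
  have hj : 1 ≤ j := hi.trans hij
  have h1 : (0:ℝ) < (j:ℝ) := by exact_mod_cast hj
  rw [bseq_eq hj]
  have key : 1/(j:ℝ) - 1/((j:ℝ)+1) = 1 / ((j : ℝ) * ((j : ℝ) + 1)) := by
    field_simp; ring
  rw [key, mul_one_div]
  have hji : rseq j ≤ rseq i := rseq_strictAnti.antitone hij
  have h3 := rseq_pos j
  have h4 : rseq j ^ 2 ≤ rseq i ^ 2 := by nlinarith
  have hd : (0:ℝ) < (j:ℝ) * ((j:ℝ)+1) := mul_pos h1 (by linarith)
  rw [div_le_div_iff₀ hd hd]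
  nlinarith
lemma partial_tele {i : ℕ} (hi : 1 ≤ i) : ∀ n, i ≤ n →
    ∑ j ∈ Finset.range n, (if i ≤ j then (1/(j:ℝ) - 1/((j:ℝ)+1)) else 0)
      = 1/(i:ℝ) - 1/(n:ℝ) := by
  intro n hn
  induction n, hn using Nat.le_induction with
  | base =>
    rw [Finset.sum_eq_zero, sub_self]
    intro j hj
    rw [if_neg (by simpa using Finset.mem_range.1 hj)]
  | succ n hn ih =>
    rw [Finset.sum_range_succ, ih, if_pos hn]
    have h1 : (0:ℝ) < (n:ℝ) := by
      have : (1:ℕ) ≤ n := hi.trans hn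
      exact_mod_cast Nat.lt_of_lt_of_le Nat.zero_lt_one this
    push_cast
    field_simp
    ring

lemma tele_nonneg {i : ℕ} (hi : 1 ≤ i) (j : ℕ) :
    0 ≤ (if i ≤ j then (1/(j:ℝ) - 1/((j:ℝ)+1)) else 0) := by
  split
  · next h =>
    have h1 : (0:ℝ) < (j:ℝ) := by exact_mod_cast hi.trans h
    have : 1/((j:ℝ)+1) ≤ 1/(j:ℝ) := one_div_le_one_div_of_le h1 (by linarith)
    linarith
  · exact le_refl 0

lemma hasSum_tele {i : ℕ} (hi : 1 ≤ i) :
    HasSum (fun j => if i ≤ j then (1/(j:ℝ) - 1/((j:ℝ)+1)) else 0) (1/(i:ℝ)) := by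
  rw [hasSum_iff_tendsto_nat_of_nonneg (tele_nonneg hi)]
  have h1 : Tendsto (fun n : ℕ => 1/(i:ℝ) - 1/(n:ℝ)) atTop (𝓝 (1/(i:ℝ))) := by
    have := tendsto_one_div_atTop_nhds_zero_nat (𝕜 := ℝ)
    have h2 := Tendsto.sub (tendsto_const_nhds (x := 1/(i:ℝ)) (f := (atTop : Filter ℕ))) this
    simpa using h2
  apply h1.congr'
  filter_upwards [eventually_ge_atTop i] with n hn
  exact (partial_tele hi n hn).symm

lemma summable_tail {i : ℕ} (hi : 1 ≤ i) :
    Summable (fun j => if i ≤ j then bseq j else 0) := by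
  apply Summable.of_nonneg_of_le (fun j => by split <;> simp [bseq_nonneg])
    (fun j => ?_) (hasSum_tele hi).summable
  split
  · next h => exact bseq_le (hi.trans h)
  · exact le_refl 0

lemma Tseq_le {i : ℕ} (hi : 1 ≤ i) : Tseq i ≤ 1/(i:ℝ) := by
  rw [Tseq, ← (hasSum_tele hi).tsum_eq]
  apply Summable.tsum_le_tsum _ (summable_tail hi) (hasSum_tele hi).summable
  intro j
  split
  · next h => exact bseq_le (hi.trans h)
  · exact le_refl 0

lemma Tseq_ge {i : ℕ} (hi : 1 ≤ i) : (1 - rseq i ^ 2) * (1/(i:ℝ)) ≤ Tseq i := by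
  have hs : HasSum (fun j => (1 - rseq i ^ 2) * (if i ≤ j then (1/(j:ℝ) - 1/((j:ℝ)+1)) else 0))
      ((1 - rseq i ^ 2) * (1/(i:ℝ))) := (hasSum_tele hi).mul_left _
  rw [Tseq, ← hs.tsum_eq]
  apply Summable.tsum_le_tsum _ hs.summable (summable_tail hi)
  intro j
  by_cases h : i ≤ j
  · rw [if_pos h, if_pos h]
    exact bseq_ge hi h
  · rw [if_neg h, if_neg h, mul_zero]

lemma Tseq_nonneg {i : ℕ} (hi : 1 ≤ i) : 0 ≤ Tseq i := by
  refine le_trans ?_ (Tseq_ge hi)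
  have h1 : (0:ℝ) < (i:ℝ) := by exact_mod_cast hi
  have h2 := rseq_pos i
  have h3 := rseq_lt_one i
  have h4 : rseq i ^ 2 ≤ 1 := by nlinarith
  apply mul_nonneg (by linarith) (by positivity)

lemma Tseq_succ (i : ℕ) : Tseq i = Tseq (i + 1) + bseq i := by
  classical
  have hkey : (fun j => if i ≤ j then bseq j else 0)
      = (fun j => (if i + 1 ≤ j then bseq j else 0) + (if j = i then bseq i else 0)) := by
    funext j
    rcases lt_trichotomy j i with h | h | h
    · rw [if_neg (by omega), if_neg (by omega), if_neg (by omega), add_zero]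
    · subst h
      rw [if_pos le_rfl, if_neg (by omega), if_pos rfl, zero_add]
    · rw [if_pos (by omega), if_pos (by omega), if_neg (by omega), add_zero]
  rw [Tseq, Tseq, hkey, Summable.tsum_add (summable_tail (by omega))
    ⟨bseq i, hasSum_ite_eq i (bseq i)⟩, tsum_ite_eq]
noncomputable def Lconst : ℝ := Real.log (Real.log 2)

lemma log2_pos : (0:ℝ) < Real.log 2 := Real.log_pos one_lt_two

lemma log2_lt_one : Real.log 2 < 1 := by
  have := Real.log_two_lt_d9
  linarith

lemma Lconst_neg : Lconst < 0 := Real.log_neg log2_pos log2_lt_one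

lemma Lconst_gt : -Real.log 2 < Lconst := by
  have h1 : Real.log (1/2) < Real.log (Real.log 2) := by
    apply Real.log_lt_log (by norm_num)
    have := Real.log_two_gt_d9
    norm_num
    linarith
  have h2 : Real.log (1/2) = -Real.log 2 := by
    rw [one_div, Real.log_inv]
  rw [← h2]; exact h1

lemma aseq_pos {i : ℕ} (hi : 1 ≤ i) : 0 < aseq i := by
  have h1 : (0:ℝ) < (i:ℝ) := by exact_mod_cast hi
  unfold aseq
  positivity

lemma Tseq_eq (i : ℕ) : Tseq i
    = ∑' j : ℕ, if i ≤ j then aseq j * ((rseq j) ^ 2 - (rseq (j + 1)) ^ 2) else 0 := by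
  simp only [Tseq, bseq]

lemma f_bounds (f : ℝ → ℝ)
    (hf : ∀ i : ℕ, 1 ≤ i → ∀ x : ℝ, rseq (i + 1) < x → x ≤ rseq i →
      f x = (∑' j : ℕ, if i ≤ j then aseq j * ((rseq j) ^ 2 - (rseq (j + 1)) ^ 2) else 0) +
        aseq i * (x ^ 2 - (rseq i) ^ 2))
    {i : ℕ} {x : ℝ} (hi : 1 ≤ i) (h1 : rseq (i+1) < x) (h2 : x ≤ rseq i) :
    Tseq (i+1) < f x ∧ f x ≤ Tseq i := by
  have hfx : f x = Tseq i + aseq i * (x ^ 2 - rseq i ^ 2) := by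
    rw [hf i hi x h1 h2, ← Tseq_eq]
  have hxpos : 0 < x := lt_trans (rseq_pos _) h1
  have hap := aseq_pos hi
  constructor
  · rw [hfx, Tseq_succ i]
    have hsq : rseq (i+1) ^ 2 < x ^ 2 := by nlinarith [rseq_pos (i+1)]
    have : aseq i * (rseq (i+1) ^ 2 - rseq i ^ 2) < aseq i * (x ^ 2 - rseq i ^ 2) := by
      apply mul_lt_mul_of_pos_left _ hap
      linarith
    have hb : aseq i * (rseq (i+1) ^ 2 - rseq i ^ 2) = -bseq i := by
      unfold bseq; ring
    linarith
  · rw [hfx]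
    have hsq : x ^ 2 ≤ rseq i ^ 2 := by nlinarith
    nlinarith

set_option maxHeartbeats 1600000 in
lemma ratio_close (f : ℝ → ℝ)
    (hf : ∀ i : ℕ, 1 ≤ i → ∀ x : ℝ, rseq (i + 1) < x → x ≤ rseq i →
      f x = (∑' j : ℕ, if i ≤ j then aseq j * ((rseq j) ^ 2 - (rseq (j + 1)) ^ 2) else 0) +
        aseq i * (x ^ 2 - (rseq i) ^ 2))
    {i : ℕ} {x : ℝ} (hi : 1 ≤ i) (h1 : rseq (i+1) < x) (h2 : x ≤ rseq i) :
    |f x / gaugeH x - 1| ≤ 3 / (i:ℝ) := by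
  have hxpos : 0 < x := lt_trans (rseq_pos _) h1
  have hn : (1:ℝ) ≤ (i:ℝ) := by exact_mod_cast hi
  have hl := log2_pos
  have hL1 := Lconst_neg
  have hL2 := Lconst_gt
  set l := Real.log 2 with hldef
  set L := Lconst with hLdef
  set G := Real.log (-Real.log x) with hGdef
  set n := (i:ℝ) with hndef
  -- log x facts
  have hlogx : Real.log x < 0 := Real.log_neg hxpos (lt_of_le_of_lt h2 (rseq_lt_one i))
  have habs : |Real.log x| = -Real.log x := abs_of_neg hlogx
  -- bounds on -log x
  have hlow : (2:ℝ)^i * l ≤ -Real.log x := by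
    have := Real.log_le_log hxpos h2
    rw [log_rseq] at this
    linarith
  have hup : -Real.log x ≤ (2:ℝ)^(i+1) * l := by
    have := Real.log_lt_log (rseq_pos (i+1)) h1
    rw [log_rseq] at this
    push_cast at this ⊢
    linarith
  have h2ipos : (0:ℝ) < (2:ℝ)^i * l := by positivity
  -- bounds on G
  have hGl : n * l + L ≤ G := by
    have hle : Real.log ((2:ℝ)^i * l) ≤ G := Real.log_le_log h2ipos hlow
    rw [Real.log_mul (by positivity) (ne_of_gt hl), Real.log_pow] at hle
    push_cast at hle
    rw [hLdef, Lconst, hldef]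
    linarith
  have hGu : G ≤ (n+1) * l + L := by
    have hle : G ≤ Real.log ((2:ℝ)^(i+1) * l) := by
      apply Real.log_le_log (by linarith) hup
    rw [Real.log_mul (by positivity) (ne_of_gt hl), Real.log_pow] at hle
    push_cast at hle
    rw [hLdef, Lconst, hldef]
    linarith
  have hGpos : 0 < G := by nlinarith
  -- gaugeH value
  have hgauge : gaugeH x = l / G := by rw [gaugeH, habs, hGdef]
  have key : f x / gaugeH x = f x * G / l := by
    rw [hgauge]
    field_simp
  -- bounds on f x
  obtain ⟨hf1, hf2⟩ := f_bounds f hf hi h1 h2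
  have hTu : Tseq i ≤ 1/n := Tseq_le hi
  have hTl : (1 - rseq (i+1) ^ 2) * (1/(n+1)) ≤ Tseq (i+1) := by
    have h := Tseq_ge (i := i+1) (by omega)
    have hc : ((i+1:ℕ):ℝ) = n + 1 := by rw [hndef]; push_cast; ring
    rw [hc] at h
    exact h
  set a := f x with hadef
  set d := rseq (i+1) ^ 2 with hddef
  have hd0 : 0 ≤ d := sq_nonneg _
  have hd1 : d * n ≤ 1 := by
    have e2 : rseq (i+1) ≤ 1 := (rseq_lt_one _).le
    have e2' : 0 < rseq (i+1) := rseq_pos _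
    have e3 : d ≤ rseq (i+1) := by rw [hddef]; nlinarith
    have e5 : n ≤ (2:ℝ) ^ (i+1:ℕ) := by
      rw [hndef]
      exact_mod_cast le_trans (Nat.lt_two_pow_self (n := i)).le
        (Nat.pow_le_pow_right (by norm_num) (Nat.le_succ i))
    have e4 : rseq (i+1) ≤ ((2:ℝ) ^ (i+1:ℕ))⁻¹ := by
      have h := rseq_le_pow (i+1); rwa [inv_pow] at h
    have e7 : (0:ℝ) < (2:ℝ)^(i+1:ℕ) := by positivity
    calc d * n ≤ rseq (i+1) * (2:ℝ)^(i+1:ℕ) := by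
          apply mul_le_mul e3 e5 (by rw [hndef]; positivity) e2'.le
      _ ≤ ((2:ℝ)^(i+1:ℕ))⁻¹ * (2:ℝ)^(i+1:ℕ) :=
          mul_le_mul_of_nonneg_right e4 e7.le
      _ = 1 := inv_mul_cancel₀ (ne_of_gt e7)
  have hd2 : d ≤ 1 := by
    rw [hddef]; nlinarith [rseq_pos (i+1), rseq_lt_one (i+1)]
  have ha2 : (1 - d) * (1/(n+1)) ≤ a := le_trans hTl hf1.le
  have ha1 : a * n ≤ 1 := by
    have : a ≤ 1/n := le_trans hf2 hTu
    rw [le_div_iff₀ (by linarith)] at this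
    linarith
  have ha0 : 0 ≤ a := by
    have h9 : (0:ℝ) ≤ (1 - d) * (1/(n+1)) :=
      mul_nonneg (by linarith) (by positivity)
    linarith
  -- main bounds
  have main_up : a * G * n ≤ l * (n + 3) := by
    have e1 : a * G * n = (a * n) * G := by ring
    have e2 : (a*n) * G ≤ 1 * G := mul_le_mul_of_nonneg_right ha1 hGpos.le
    rw [one_mul] at e2
    linarith
  have main_lo : l * (n - 3) ≤ a * G * n := by
    rcases le_or_gt n 3 with h | h
    · have h8 : 0 ≤ a * G * n :=
        mul_nonneg (mul_nonneg ha0 hGpos.le) (by linarith)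
      nlinarith [mul_nonneg hl.le (show (0:ℝ) ≤ 3 - n by linarith)]
    · have e0 : a * (n+1) ≥ 1 - d := by
        have h9 := ha2
        rw [mul_one_div, div_le_iff₀ (by linarith)] at h9
        linarith
      have e1 : (n - 1) * l ≤ G := by nlinarith
      have e2 : (1 - d) * ((n-1) * l) ≤ (a * (n+1)) * G := by
        apply mul_le_mul e0 e1 (mul_nonneg (by linarith) hl.le)
          (mul_nonneg ha0 (by linarith))
      have e3 : (1 - d) * ((n-1) * l) * n ≤ (a * (n+1)) * G * n :=
        mul_le_mul_of_nonneg_right e2 (by linarith)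
      have e4 : (n-1)^2 * l ≤ (1 - d) * ((n-1)*l) * n := by
        nlinarith [mul_nonneg (mul_nonneg hl.le (show (0:ℝ) ≤ n-1 by linarith))
          (show (0:ℝ) ≤ 1 - d*n by linarith)]
      have e6 : (n-3)*l*(n+1) ≤ a*G*n*(n+1) := by nlinarith
      have e7 := le_of_mul_le_mul_right e6 (show (0:ℝ) < n+1 by linarith)
      linarith
  -- conclude
  rw [key]
  have hln : (0:ℝ) < l * n := by positivity
  have key2 : a * G / l - 1 = (a * G * n - l * n)/(l * n) := by
    field_simp
  rw [key2, abs_div, abs_of_pos hln]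
  have habs2 : |a * G * n - l * n| ≤ 3 * l := by
    rw [abs_le]
    constructor <;> nlinarith
  have hfin : |a * G * n - l * n| / (l * n) ≤ (3 * l) / (l * n) := by
    rw [div_le_div_iff₀ hln hln]
    nlinarith [mul_le_mul_of_nonneg_right habs2 hln.le, abs_nonneg (a * G * n - l * n)]
  refine hfin.trans (le_of_eq ?_)
  field_simp

lemma part1 (f : ℝ → ℝ)
    (hf : ∀ i : ℕ, 1 ≤ i → ∀ x : ℝ, rseq (i + 1) < x → x ≤ rseq i →
      f x = (∑' j : ℕ, if i ≤ j then aseq j * ((rseq j) ^ 2 - (rseq (j + 1)) ^ 2) else 0) +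
        aseq i * (x ^ 2 - (rseq i) ^ 2)) :
    Filter.Tendsto (fun x : ℝ => f x / gaugeH x) (𝓝[>] (0 : ℝ)) (𝓝 1) := by
  rw [Metric.tendsto_nhdsWithin_nhds]
  intro ε hε
  obtain ⟨N, hN⟩ := exists_nat_gt (3/ε)
  have hN1 : 1 ≤ N + 1 := by omega
  have hNε : 3 / ((N:ℝ)+1) < ε := by
    have h3 : (0:ℝ) < 3/ε := by positivity
    have hNpos : (0:ℝ) < (N:ℝ) := lt_trans h3 hN
    rw [div_lt_iff₀ (by linarith)]
    rw [div_lt_iff₀ hε] at hN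
    nlinarith
  refine ⟨rseq (N+1), rseq_pos _, ?_⟩
  intro x hx hdist
  have hxpos : 0 < x := hx
  rw [Real.dist_eq, sub_zero, abs_of_pos hxpos] at hdist
  obtain ⟨i, hiN, hi1, hi2⟩ := exists_interval (N+1) hxpos hdist.le
  have hclose := ratio_close f hf (le_trans hN1 hiN) hi1 hi2
  rw [Real.dist_eq]
  have h1 : ((N:ℝ)+1) ≤ (i:ℝ) := by exact_mod_cast hiN
  have h2' : 3/(i:ℝ) ≤ 3/((N:ℝ)+1) := by
    apply div_le_div_of_nonneg_left (by norm_num) (by positivity) h1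
  exact lt_of_le_of_lt (le_trans hclose h2') hNε
/-- derivative of the gauge -/
lemma gaugeH_deriv {x : ℝ} (hx0 : 0 < x) (hlx : Real.log x < -1) :
    HasDerivAt gaugeH
      (Real.log 2 * (-(-x⁻¹ / -Real.log x) / Real.log (-Real.log x) ^ 2)) x := by
  have hxne : x ≠ 0 := ne_of_gt hx0
  have hx1 : x < 1 := by
    by_contra h
    push_neg at h
    linarith [Real.log_nonneg h]
  have hnlpos : (1:ℝ) < -Real.log x := by linarith
  have h1 : HasDerivAt (fun y : ℝ => -Real.log y) (-x⁻¹) x :=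
    (Real.hasDerivAt_log hxne).neg
  have h2 : HasDerivAt (fun y : ℝ => Real.log (-Real.log y))
      (-x⁻¹ / -Real.log x) x := h1.log (by linarith)
  have hupos : 0 < Real.log (-Real.log x) := Real.log_pos hnlpos
  have h3 : HasDerivAt (fun y : ℝ => (Real.log (-Real.log y))⁻¹)
      (-(-x⁻¹ / -Real.log x) / Real.log (-Real.log x) ^ 2) x := h2.inv (ne_of_gt hupos)
  have h4 := h3.const_mul (Real.log 2)
  apply h4.congr_of_eventuallyEq
  have hmem : Ioo (0:ℝ) 1 ∈ 𝓝 x := Ioo_mem_nhds hx0 hx1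
  filter_upwards [hmem] with y hy
  rw [gaugeH, abs_of_neg (Real.log_neg hy.1 hy.2), div_eq_mul_inv]

lemma log_lt_neg_one {i : ℕ} {x : ℝ} (hi : 1 ≤ i) (hx0 : 0 < x) (h2 : x < rseq i) :
    Real.log x < -1 := by
  have hr1 : rseq 1 = 1/4 := by
    rw [rseq]; norm_num
  have hle : rseq i ≤ 1/4 := by
    rw [← hr1]; exact rseq_strictAnti.antitone hi
  have hlt : Real.log x < Real.log (1/4) := Real.log_lt_log hx0 (by linarith)
  have : Real.log (1/4) = -(2 * Real.log 2) := by
    rw [show (1:ℝ)/4 = (2^2)⁻¹ by norm_num, Real.log_inv, Real.log_pow]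
    push_cast; ring
  rw [this] at hlt
  have := Real.log_two_gt_d9
  linarith

/-- positivity of deriv gaugeH -/
lemma gaugeH_deriv_pos {x : ℝ} (hx0 : 0 < x) (hlx : Real.log x < -1) :
    0 < Real.log 2 * (-(-x⁻¹ / -Real.log x) / Real.log (-Real.log x) ^ 2) := by
  have hnlpos : (1:ℝ) < -Real.log x := by linarith
  have hupos : 0 < Real.log (-Real.log x) := Real.log_pos hnlpos
  have h1 : -x⁻¹ / -Real.log x < 0 := by
    exact div_neg_of_neg_of_pos (neg_neg_of_pos (inv_pos.2 hx0)) (by linarith)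
  apply mul_pos log2_pos
  apply div_pos (by linarith) (by positivity)

lemma deriv_f_at (f : ℝ → ℝ)
    (hf : ∀ i : ℕ, 1 ≤ i → ∀ x : ℝ, rseq (i + 1) < x → x ≤ rseq i →
      f x = (∑' j : ℕ, if i ≤ j then aseq j * ((rseq j) ^ 2 - (rseq (j + 1)) ^ 2) else 0) +
        aseq i * (x ^ 2 - (rseq i) ^ 2))
    {i : ℕ} {x : ℝ} (hi : 1 ≤ i) (h1 : rseq (i+1) < x) (h2 : x < rseq i) :
    deriv f x = 2 * aseq i * x := by
  have heq : (fun y => Tseq i + aseq i * (y^2 - rseq i^2)) =ᶠ[𝓝 x] f := by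
    filter_upwards [Ioo_mem_nhds h1 h2] with y hy
    rw [hf i hi y hy.1 hy.2.le, ← Tseq_eq]
  rw [← heq.deriv_eq]
  have hq : HasDerivAt (fun y => Tseq i + aseq i * (y ^ 2 - rseq i ^ 2))
      (2 * aseq i * x) x := by
    have h := ((hasDerivAt_pow 2 x).sub_const (rseq i ^ 2)).const_mul (aseq i)
    have h' := h.const_add (Tseq i)
    have e : aseq i * ((2:ℕ) * x ^ (2 - 1)) = 2 * aseq i * x := by
      have e2 : (2:ℕ) - 1 = 1 := rfl
      rw [e2, pow_one]; push_cast; ring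
    rw [e] at h'
    exact h'
  exact hq.deriv

/-- the ratio of derivatives, explicitly -/
lemma ratio_at (f : ℝ → ℝ)
    (hf : ∀ i : ℕ, 1 ≤ i → ∀ x : ℝ, rseq (i + 1) < x → x ≤ rseq i →
      f x = (∑' j : ℕ, if i ≤ j then aseq j * ((rseq j) ^ 2 - (rseq (j + 1)) ^ 2) else 0) +
        aseq i * (x ^ 2 - (rseq i) ^ 2))
    {i : ℕ} {x : ℝ} (hi : 1 ≤ i) (h1 : rseq (i+1) < x) (h2 : x < rseq i) :
    deriv f x / deriv gaugeH x
      = 2 * aseq i * x^2 * (-Real.log x) * (Real.log (-Real.log x))^2 / Real.log 2 := by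
  have hx0 : 0 < x := lt_trans (rseq_pos _) h1
  have hlx : Real.log x < -1 := log_lt_neg_one hi hx0 h2
  have hH := (gaugeH_deriv hx0 hlx).deriv
  rw [deriv_f_at f hf hi h1 h2, hH]
  have hnlpos : (1:ℝ) < -Real.log x := by linarith
  have hupos : 0 < Real.log (-Real.log x) := Real.log_pos hnlpos
  have hxne : x ≠ 0 := ne_of_gt hx0
  have hlne : Real.log x ≠ 0 := by linarith
  have hune : Real.log (-Real.log x) ≠ 0 := ne_of_gt hupos
  have hl2ne : Real.log 2 ≠ 0 := ne_of_gt log2_pos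
  field_simp
lemma nat_3i (i : ℕ) : 2*i + 1 ≤ 2^(i+1) := by
  induction i with
  | zero => norm_num
  | succ n ih =>
    have h2 : 1 ≤ 2^(n+1) := Nat.one_le_two_pow
    calc 2*(n+1) + 1 = (2*n+1) + 2 := by ring
    _ ≤ 2^(n+1) + 2^(n+1) := by omega
    _ = 2^(n+2) := by ring

lemma rseq_lt_half {i : ℕ} (hi : 1 ≤ i) : rseq i < 1/2 := by
  have h : rseq i ≤ rseq 1 := rseq_strictAnti.antitone hi
  have h1 : rseq 1 = 1/4 := by rw [rseq]; norm_num
  linarith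

lemma xpt_mem {i : ℕ} (hi : 1 ≤ i) : rseq (i+1) < rseq i / 2 ∧ rseq i / 2 < rseq i := by
  have h0 := rseq_pos i
  have hh := rseq_lt_half hi
  constructor
  · rw [rseq_succ]; nlinarith
  · linarith

lemma zpt_mem {i : ℕ} (hi : 1 ≤ i) :
    rseq (i+1) < 2 * rseq (i+1) ∧ 2 * rseq (i+1) < rseq i := by
  have h0 := rseq_pos (i+1)
  have h1 := rseq_pos i
  have hh := rseq_lt_half hi
  constructor
  · linarith
  · rw [rseq_succ]; nlinarith

set_option maxHeartbeats 1600000 in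
lemma limsup_pt (f : ℝ → ℝ)
    (hf : ∀ i : ℕ, 1 ≤ i → ∀ x : ℝ, rseq (i + 1) < x → x ≤ rseq i →
      f x = (∑' j : ℕ, if i ≤ j then aseq j * ((rseq j) ^ 2 - (rseq (j + 1)) ^ 2) else 0) +
        aseq i * (x ^ 2 - (rseq i) ^ 2))
    {i : ℕ} (hi : 2 ≤ i) :
    (2:ℝ)^(i-1:ℕ)/32 ≤ deriv f (rseq i / 2) / deriv gaugeH (rseq i / 2) := by
  have hi1 : 1 ≤ i := by omega
  obtain ⟨hm1, hm2⟩ := xpt_mem hi1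
  rw [ratio_at f hf hi1 hm1 hm2]
  have hl := log2_pos
  have hl9 := Real.log_two_gt_d9
  have hn : (2:ℝ) ≤ (i:ℝ) := by exact_mod_cast hi
  set l := Real.log 2 with hldef
  set n := (i:ℝ) with hndef
  set x := rseq i / 2 with hxdef
  have h2ipos : (0:ℝ) < (2:ℝ)^(i:ℕ) := by positivity
  have hlogx : Real.log x = -(((2:ℝ)^(i:ℕ) + 1) * l) := by
    rw [hxdef, Real.log_div (ne_of_gt (rseq_pos i)) two_ne_zero, log_rseq]
    rw [hldef]; ring
  have hnl : -Real.log x = ((2:ℝ)^(i:ℕ) + 1) * l := by rw [hlogx]; ring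
  have hnlge : (2:ℝ)^(i:ℕ) * l ≤ -Real.log x := by rw [hnl]; nlinarith
  have hu_ge : ((n:ℝ)-1) * l ≤ Real.log (-Real.log x) := by
    have e1 : Real.log ((2:ℝ)^(i:ℕ) * l) ≤ Real.log (-Real.log x) :=
      Real.log_le_log (by positivity) hnlge
    rw [Real.log_mul (by positivity) (ne_of_gt hl), Real.log_pow] at e1
    have e2 : -l < Real.log l := Lconst_gt
    rw [hndef]
    linarith
  have hu_nonneg : (0:ℝ) ≤ (n-1)*l := mul_nonneg (by linarith) hl.le
  set u := Real.log (-Real.log x) with hudef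
  have husq : ((n-1)*l)^2 ≤ u^2 :=
    pow_le_pow_left₀ hu_nonneg hu_ge 2
  have hA : 2*aseq i*x^2 = (1/(n*(n+1)))/2 := by
    rw [hxdef, hndef]
    linear_combination (aseq_rseq_sq hi1)/2
  rw [hA, hnl]
  have hnpos : (0:ℝ) < n := by linarith
  have hC : (0:ℝ) ≤ (1/(n*(n+1)))/2 := by positivity
  have hgc : (1/(n*(n+1)))/2 * ((2:ℝ)^(i:ℕ) * l) * (((n:ℝ)-1)*l)^2 / l
      ≤ (1/(n*(n+1)))/2 * (((2:ℝ)^(i:ℕ) + 1) * l) * u^2 / l := by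
    apply div_le_div_of_nonneg_right _ hl.le
    apply mul_le_mul (mul_le_mul_of_nonneg_left (by nlinarith) hC) husq
      (sq_nonneg _) (mul_nonneg hC (mul_nonneg (by positivity) hl.le))
  refine le_trans ?_ hgc
  -- numeric inequality
  have hEq : (1/(n*(n+1)))/2 * ((2:ℝ)^(i:ℕ) * l) * (((n:ℝ)-1)*l)^2 / l
      = (2:ℝ)^(i:ℕ)*(n-1)^2*l^2/(2*(n*(n+1))) := by
    field_simp
  rw [hEq, div_le_div_iff₀ (by norm_num) (by positivity)]
  have hQ : (0:ℝ) < (2:ℝ)^(i-1:ℕ) := by positivity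
  have h2Q : (2:ℝ)^(i:ℕ) = 2*(2:ℝ)^(i-1:ℕ) := by
    rw [← pow_succ']
    congr 1
    omega
  have h8 : n*(n+1) ≤ 8*(n-1)^2 := by nlinarith [sq_nonneg (n-2)]
  have hl4 : (1:ℝ)/4 ≤ l^2 := by nlinarith
  have hcomb : 2*(n*(n+1)) ≤ 64*(n-1)^2*l^2 := by nlinarith [sq_nonneg (n-1)]
  have := mul_le_mul_of_nonneg_left hcomb hQ.le
  rw [h2Q]
  nlinarith [this]

set_option maxHeartbeats 1600000 in
lemma liminf_pt (f : ℝ → ℝ)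
    (hf : ∀ i : ℕ, 1 ≤ i → ∀ x : ℝ, rseq (i + 1) < x → x ≤ rseq i →
      f x = (∑' j : ℕ, if i ≤ j then aseq j * ((rseq j) ^ 2 - (rseq (j + 1)) ^ 2) else 0) +
        aseq i * (x ^ 2 - (rseq i) ^ 2))
    {i : ℕ} (hi : 1 ≤ i) :
    deriv f (2 * rseq (i+1)) / deriv gaugeH (2 * rseq (i+1))
      ≤ 16 * ((2:ℝ)^(i:ℕ))⁻¹ := by
  obtain ⟨hm1, hm2⟩ := zpt_mem hi
  rw [ratio_at f hf hi hm1 hm2]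
  have hl := log2_pos
  have hl9 := Real.log_two_gt_d9
  have hl1 := log2_lt_one
  have hn : (1:ℝ) ≤ (i:ℝ) := by exact_mod_cast hi
  set l := Real.log 2 with hldef
  set n := (i:ℝ) with hndef
  set z := 2 * rseq (i+1) with hzdef
  have hP : (0:ℝ) < (2:ℝ)^(i+1:ℕ) := by positivity
  have hQ : (0:ℝ) < (2:ℝ)^(i:ℕ) := by positivity
  have hP4 : (4:ℝ) ≤ (2:ℝ)^(i+1:ℕ) := by
    calc (4:ℝ) = 2^(2:ℕ) := by norm_num
    _ ≤ (2:ℝ)^(i+1:ℕ) := pow_le_pow_right₀ one_le_two (by omega)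
  have hlogz : Real.log z = -(((2:ℝ)^(i+1:ℕ) - 1) * l) := by
    rw [hzdef, Real.log_mul two_ne_zero (ne_of_gt (rseq_pos (i+1))), log_rseq]
    rw [hldef]; push_cast; ring
  have hnl : -Real.log z = ((2:ℝ)^(i+1:ℕ) - 1) * l := by rw [hlogz]; ring
  have hnl_le : -Real.log z ≤ (2:ℝ)^(i+1:ℕ) * l := by rw [hnl]; nlinarith
  have hnl_ge1 : (1:ℝ) ≤ -Real.log z := by rw [hnl]; nlinarith
  have hu_nonneg : 0 ≤ Real.log (-Real.log z) := Real.log_nonneg hnl_ge1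
  have hu_le : Real.log (-Real.log z) ≤ (n+1) * l := by
    have e1 : Real.log (-Real.log z) ≤ Real.log ((2:ℝ)^(i+1:ℕ) * l) :=
      Real.log_le_log (by linarith) hnl_le
    rw [Real.log_mul (by positivity) (ne_of_gt hl), Real.log_pow] at e1
    have e2 : Real.log l < 0 := Lconst_neg
    rw [hndef]
    push_cast at e1 ⊢
    linarith
  set u := Real.log (-Real.log z) with hudef
  have husq : u^2 ≤ ((n+1)*l)^2 :=
    pow_le_pow_left₀ hu_nonneg hu_le 2
  have hA : 2*aseq i*z^2 = 8*rseq (i+1)*(1/(n*(n+1))) := by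
    rw [hzdef, rseq_succ, hndef]
    linear_combination (8*rseq i^2) * (aseq_rseq_sq hi)
  rw [hA, hnl]
  have hnpos : (0:ℝ) < n := by linarith
  have hr := rseq_pos (i+1)
  have hC : (0:ℝ) ≤ 8*rseq (i+1)*(1/(n*(n+1))) := by
    apply mul_nonneg (by nlinarith) (by positivity)
  have hgc : 8*rseq (i+1)*(1/(n*(n+1))) * (((2:ℝ)^(i+1:ℕ) - 1) * l) * u^2 / l
      ≤ 8*rseq (i+1)*(1/(n*(n+1))) * ((2:ℝ)^(i+1:ℕ) * l) * ((n+1)*l)^2 / l := by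
    apply div_le_div_of_nonneg_right _ hl.le
    apply mul_le_mul (mul_le_mul_of_nonneg_left (by nlinarith) hC) husq
      (sq_nonneg _) (mul_nonneg hC (mul_nonneg hP.le hl.le))
  refine le_trans hgc ?_
  have hEq : 8*rseq (i+1)*(1/(n*(n+1))) * ((2:ℝ)^(i+1:ℕ) * l) * ((n+1)*l)^2 / l
      = 8*rseq (i+1)*(2:ℝ)^(i+1:ℕ)*(n+1)*l^2/n := by
    field_simp
  rw [hEq]
  -- key smallness
  have key1 : rseq (i+1) * (2:ℝ)^(i+1:ℕ) * (2:ℝ)^(i:ℕ) ≤ 1 := by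
    have e1 : (2:ℝ)^(i+1:ℕ) * (2:ℝ)^(i:ℕ) = (2:ℝ)^(2*i+1:ℕ) := by
      rw [← pow_add]; congr 1; omega
    have e2 : (2:ℝ)^(2*i+1:ℕ) ≤ (2:ℝ)^(2^(i+1):ℕ) :=
      pow_le_pow_right₀ one_le_two (nat_3i i)
    have e3 : rseq (i+1) * (2:ℝ)^(2^(i+1):ℕ) = 1 := by
      rw [rseq]; exact inv_mul_cancel₀ (by positivity)
    calc rseq (i+1) * (2:ℝ)^(i+1:ℕ) * (2:ℝ)^(i:ℕ)
        = rseq (i+1) * ((2:ℝ)^(i+1:ℕ) * (2:ℝ)^(i:ℕ)) := by ring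
    _ ≤ rseq (i+1) * (2:ℝ)^(2^(i+1):ℕ) := by
        rw [e1]
        exact mul_le_mul_of_nonneg_left e2 hr.le
    _ = 1 := e3
  have key2 : rseq (i+1) * (2:ℝ)^(i+1:ℕ) ≤ ((2:ℝ)^(i:ℕ))⁻¹ := by
    rw [← one_div, le_div_iff₀ hQ]
    exact key1
  rw [div_le_iff₀ hnpos]
  have hn1 : n+1 ≤ 2*n := by linarith
  have hl2 : l^2 ≤ 1 := by nlinarith
  have t1 : rseq (i+1)*(2:ℝ)^(i+1:ℕ)*(n+1) ≤ ((2:ℝ)^(i:ℕ))⁻¹*(2*n) :=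
    mul_le_mul key2 hn1 (by linarith) (inv_nonneg.2 hQ.le)
  have t2 : (0:ℝ) ≤ rseq (i+1)*(2:ℝ)^(i+1:ℕ)*(n+1) :=
    mul_nonneg (mul_nonneg hr.le hP.le) (by linarith)
  nlinarith [t1, hl2, t2, mul_nonneg t2 (show (0:ℝ) ≤ 1 - l^2 by linarith)]
lemma quad_deriv (C A R x : ℝ) : HasDerivAt (fun y => C + A * (y^2 - R)) (2*A*x) x := by
  have h := ((hasDerivAt_pow 2 x).sub_const R).const_mul A
  have h' := h.const_add C
  have e : A * ((2:ℕ) * x ^ (2 - 1)) = 2*A*x := by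
    have e2 : (2:ℕ) - 1 = 1 := rfl
    rw [e2, pow_one]; push_cast; ring
  rw [e] at h'
  exact h'

lemma aseq_lt {m : ℕ} (hm : 1 ≤ m) : aseq m < aseq (m+1) := by
  have h1 : (1:ℝ) ≤ (m:ℝ) := by exact_mod_cast hm
  set P := (2:ℝ)^(2^(m+1):ℕ) with hPdef
  have hPpos : (0:ℝ) < P := by rw [hPdef]; positivity
  have hP16 : (16:ℝ) ≤ P := by
    rw [hPdef]
    calc (16:ℝ) = 2^(4:ℕ) := by norm_num
    _ ≤ (2:ℝ)^(2^(m+1):ℕ) := by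
        apply pow_le_pow_right₀ one_le_two
        calc 4 = 2^2 := by norm_num
        _ ≤ 2^(m+1) := Nat.pow_le_pow_right (by norm_num) (by omega)
  have hP2 : (2:ℝ)^(2^(m+1+1):ℕ) = P^2 := by
    rw [hPdef, ← pow_mul]
    congr 1
  unfold aseq
  rw [hP2]
  push_cast
  rw [div_lt_div_iff₀ (by nlinarith) (by nlinarith)]
  have key : (m:ℝ) + 2 < P * (m:ℝ) := by nlinarith
  nlinarith [mul_lt_mul_of_pos_left key (mul_pos hPpos (show (0:ℝ) < (m:ℝ)+1 by linarith))]

lemma f_not_diff (f : ℝ → ℝ)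
    (hf : ∀ i : ℕ, 1 ≤ i → ∀ x : ℝ, rseq (i + 1) < x → x ≤ rseq i →
      f x = (∑' j : ℕ, if i ≤ j then aseq j * ((rseq j) ^ 2 - (rseq (j + 1)) ^ 2) else 0) +
        aseq i * (x ^ 2 - (rseq i) ^ 2))
    {i : ℕ} (hi : 2 ≤ i) : ¬ DifferentiableAt ℝ f (rseq i) := by
  obtain ⟨m, rfl⟩ : ∃ m, i = m + 1 := ⟨i-1, by omega⟩
  have hm : 1 ≤ m := by omega
  have hm1 : 1 ≤ m + 1 := by omega
  intro hdiff
  set p := rseq (m+1) with hpdef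
  have hppos : 0 < p := rseq_pos (m+1)
  have hfp : f p = Tseq (m+1) := by
    have h := hf (m+1) hm1 p (rseq_strictAnti (Nat.lt_succ_self (m+1))) le_rfl
    rw [h, ← Tseq_eq]
    simp [hpdef]
  -- left derivative
  have hL : HasDerivWithinAt f (2*aseq (m+1)*p) (Iio p) p := by
    apply (quad_deriv (Tseq (m+1)) (aseq (m+1)) (rseq (m+1) ^2) p).hasDerivWithinAt.congr_of_eventuallyEq
    · have hmem : Ioo (rseq (m+2)) p ∈ 𝓝[Iio p] p :=
        Ioo_mem_nhdsLT (rseq_strictAnti (Nat.lt_succ_self (m+1)))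
      filter_upwards [hmem] with y hy
      rw [hf (m+1) hm1 y hy.1 hy.2.le, ← Tseq_eq]
    · rw [hfp]; simp [hpdef]
  -- right derivative
  have hqp : Tseq m + aseq m * (p^2 - rseq m^2) = Tseq (m+1) := by
    have h1 : Tseq m = Tseq (m+1) + bseq m := Tseq_succ m
    have h2 : aseq m * (p^2 - rseq m^2) = -bseq m := by
      rw [hpdef]
      unfold bseq
      ring
    rw [h1, h2]
    ring
  have hR : HasDerivWithinAt f (2*aseq m*p) (Ioi p) p := by
    apply (quad_deriv (Tseq m) (aseq m) (rseq m ^2) p).hasDerivWithinAt.congr_of_eventuallyEq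
    · have hlt : p < rseq m := rseq_strictAnti (Nat.lt_succ_self m)
      have hmem : Ioo p (rseq m) ∈ 𝓝[Ioi p] p := Ioo_mem_nhdsGT hlt
      filter_upwards [hmem] with y hy
      rw [hf m hm y hy.1 hy.2.le, ← Tseq_eq]
    · rw [hfp, hqp]
  -- contradiction
  have d1 : derivWithin f (Iio p) p = 2*aseq (m+1)*p := hL.derivWithin (uniqueDiffWithinAt_Iio p)
  have d1' : derivWithin f (Iio p) p = deriv f p :=
    (hdiff.hasDerivAt.hasDerivWithinAt).derivWithin (uniqueDiffWithinAt_Iio p)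
  have d2 : derivWithin f (Ioi p) p = 2*aseq m*p := hR.derivWithin (uniqueDiffWithinAt_Ioi p)
  have d2' : derivWithin f (Ioi p) p = deriv f p :=
    (hdiff.hasDerivAt.hasDerivWithinAt).derivWithin (uniqueDiffWithinAt_Ioi p)
  have heq : 2*aseq (m+1)*p = 2*aseq m*p := by rw [← d1, d1', ← d2', d2]
  have hlt : aseq m < aseq (m+1) := aseq_lt hm
  nlinarith

lemma ratio_nonneg (f : ℝ → ℝ)
    (hf : ∀ i : ℕ, 1 ≤ i → ∀ x : ℝ, rseq (i + 1) < x → x ≤ rseq i →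
      f x = (∑' j : ℕ, if i ≤ j then aseq j * ((rseq j) ^ 2 - (rseq (j + 1)) ^ 2) else 0) +
        aseq i * (x ^ 2 - (rseq i) ^ 2))
    {x : ℝ} (hx : x ∈ Ioo (0:ℝ) (rseq 2)) :
    0 ≤ deriv f x / deriv gaugeH x := by
  obtain ⟨i, hi2, hlt, hle⟩ := exists_interval 2 hx.1 hx.2.le
  have hi1 : 1 ≤ i := by omega
  rcases eq_or_lt_of_le hle with heq | hlt2
  · rw [heq, deriv_zero_of_not_differentiableAt (f_not_diff f hf hi2), zero_div]
  · rw [ratio_at f hf hi1 hlt hlt2]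
    have hx0 : 0 < x := hx.1
    have hlx : Real.log x < -1 := log_lt_neg_one hi1 hx0 hlt2
    have h1 : (0:ℝ) ≤ -Real.log x := by linarith
    apply div_nonneg _ log2_pos.le
    have ha : (0:ℝ) ≤ 2 * aseq i := by linarith [aseq_pos hi1]
    exact mul_nonneg (mul_nonneg (mul_nonneg ha (sq_nonneg x)) h1) (sq_nonneg _)
lemma xseq_tendsto : Filter.Tendsto (fun i : ℕ => rseq i / 2) atTop (𝓝[>] (0:ℝ)) := by
  rw [tendsto_nhdsWithin_iff]
  constructor
  · simpa using rseq_tendsto.div_const 2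
  · filter_upwards with i
    exact div_pos (rseq_pos i) two_pos

lemma zseq_tendsto : Filter.Tendsto (fun i : ℕ => 2 * rseq (i+1)) atTop (𝓝[>] (0:ℝ)) := by
  rw [tendsto_nhdsWithin_iff]
  constructor
  · have h1 : Filter.Tendsto (fun i : ℕ => rseq (i+1)) atTop (𝓝 (0:ℝ)) :=
      rseq_tendsto.comp (tendsto_add_atTop_nat 1)
    simpa using h1.const_mul (2:ℝ)
  · filter_upwards with i
    exact mul_pos two_pos (rseq_pos (i+1))

theorem kneser_example_extreme (f : ℝ → ℝ)
    (hf : ∀ i : ℕ, 1 ≤ i → ∀ x : ℝ, rseq (i + 1) < x → x ≤ rseq i →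
      f x = (∑' j : ℕ, if i ≤ j then aseq j * ((rseq j) ^ 2 - (rseq (j + 1)) ^ 2) else 0) +
        aseq i * (x ^ 2 - (rseq i) ^ 2)) :
    Filter.Tendsto (fun x : ℝ => f x / gaugeH x) (𝓝[>] (0 : ℝ)) (𝓝 1) ∧
      Filter.liminf (fun r : ℝ => ((deriv f r / deriv gaugeH r : ℝ) : EReal))
        (𝓝[>] (0 : ℝ)) = 0 ∧
      Filter.limsup (fun r : ℝ => ((deriv f r / deriv gaugeH r : ℝ) : EReal))
        (𝓝[>] (0 : ℝ)) = ⊤ := by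
  refine ⟨part1 f hf, ?_, ?_⟩
  · -- liminf = 0
    apply le_antisymm
    · -- liminf ≤ 0
      by_contra hc
      rw [not_le] at hc
      obtain ⟨y, hy0, hyl⟩ := EReal.exists_between_coe_real hc
      have hy0' : (0:ℝ) < y := by exact_mod_cast hy0
      have hfreq : ∃ᶠ r in 𝓝[>](0:ℝ),
          ((deriv f r / deriv gaugeH r : ℝ) : EReal) ≤ (y : EReal) := by
        apply zseq_tendsto.frequently
        apply Filter.Eventually.frequently
        have htend : Filter.Tendsto (fun i : ℕ => 16*((2:ℝ)^(i:ℕ))⁻¹) atTop (𝓝 0) := by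
          have h1 : Filter.Tendsto (fun i : ℕ => ((2:ℝ)⁻¹)^(i:ℕ)) atTop (𝓝 0) :=
            tendsto_pow_atTop_nhds_zero_of_lt_one (by norm_num) (by norm_num)
          have h2 := h1.const_mul (16:ℝ)
          simp only [inv_pow] at h2
          simpa using h2
        filter_upwards [htend.eventually_lt_const hy0', eventually_ge_atTop 1] with i h1 h2
        have hb := liminf_pt f hf h2
        exact_mod_cast EReal.coe_le_coe_iff.2 (by linarith)
      have hle := Filter.liminf_le_of_frequently_le' hfreq
      exact absurd (lt_of_lt_of_le hyl hle) (lt_irrefl _)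
    · -- 0 ≤ liminf
      have hev : ∀ᶠ r in 𝓝[>](0:ℝ),
          (0 : EReal) ≤ ((deriv f r / deriv gaugeH r : ℝ) : EReal) := by
        have hmem : Ioo (0:ℝ) (rseq 2) ∈ 𝓝[>](0:ℝ) :=
          Ioo_mem_nhdsGT (rseq_pos 2)
        filter_upwards [hmem] with r hr
        exact_mod_cast ratio_nonneg f hf hr
      calc (0 : EReal) = Filter.liminf (fun _ : ℝ => (0:EReal)) (𝓝[>](0:ℝ)) :=
            (Filter.liminf_const 0).symm
      _ ≤ _ := Filter.liminf_le_liminf hev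
  · -- limsup = ⊤
    by_contra hc
    have hlt : Filter.limsup (fun r : ℝ => ((deriv f r / deriv gaugeH r : ℝ) : EReal))
        (𝓝[>] (0 : ℝ)) < ⊤ := lt_top_iff_ne_top.2 hc
    obtain ⟨M, hM1, hM2⟩ := EReal.exists_between_coe_real hlt
    have hfreq : ∃ᶠ r in 𝓝[>](0:ℝ),
        (M : EReal) ≤ ((deriv f r / deriv gaugeH r : ℝ) : EReal) := by
      apply xseq_tendsto.frequently
      apply Filter.Eventually.frequently
      obtain ⟨k, hk⟩ := exists_nat_gt (32 * M)
      filter_upwards [eventually_ge_atTop (k+2)] with i hik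
      have hi2 : 2 ≤ i := by omega
      have hb := limsup_pt f hf hi2
      have hgrow : 32 * M ≤ (2:ℝ)^(i-1:ℕ) := by
        have e1 : (k:ℝ) < (2:ℝ)^(k:ℕ) := by exact_mod_cast Nat.lt_two_pow_self (n := k)
        have e2 : (2:ℝ)^(k:ℕ) ≤ (2:ℝ)^(i-1:ℕ) :=
          pow_le_pow_right₀ one_le_two (by omega)
        linarith
      exact EReal.coe_le_coe_iff.2 (by linarith)
    have hge := Filter.le_limsup_of_frequently_le' hfreq
    exact absurd (lt_of_le_of_lt hge hM1) (lt_irrefl _)
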